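/- Let ε > 0, δ ∈ (0,1), GS > 0, τ > 0, and let qD, qDs be real numbers. Let ν be distributed as Lap(GS/ε). Then: (i) if τ ≥ (GS/ε)·ln(1/δ) and qD = qDs, then Pr[|qD + ν − qDs| < τ] ≥ 1 − δ; (ii) if τ ≥ (GS/ε)·ln(1/(2δ)) and |qD − qDs| ≥ 2τ, then Pr[|qD + ν − qDs| ≥ τ] ≥ 1 − δ. Consequently the Laplace-mechanism per-query decider LM_sum for sum queries with global sensitivity bound GS satisfies both effectiveness conditions at δ for every τ ≥ (GS/ε)·ln(1/δ). -/

import Mathlib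

open MeasureTheory Real

/-- `Lap b` : the Laplace distribution on `ℝ` with density
`x ↦ (1/(2b)) * exp (-|x|/b)` with respect to Lebesgue measure. -/
noncomputable def laplace (b : ℝ) : Measure ℝ :=
  volume.withDensity (fun x => ENNReal.ofReal ((1 / (2 * b)) * Real.exp (-|x| / b)))

section Helpers
open Set
set_option maxHeartbeats 1000000

lemma exp_tail_integral (b a : ℝ) (hb : 0 < b) :
    ∫ x in Ioi a, (1 / (2 * b)) * Real.exp (-x / b) = Real.exp (-a / b) / 2 := by
  rw [integral_const_mul]
  have h1 : ∀ x : ℝ, Real.exp (-x / b) = (fun y => Real.exp (-y)) (b⁻¹ * x) := by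
    intro x; simp [neg_div, div_eq_inv_mul]
  simp_rw [h1]
  rw [integral_comp_mul_left_Ioi (fun y => Real.exp (-y)) a (inv_pos.mpr hb),
    integral_exp_neg_Ioi]
  field_simp
  ring_nf


lemma integrableOn_tail (b a : ℝ) (hb : 0 < b) :
    IntegrableOn (fun x => (1 / (2 * b)) * Real.exp (-x / b)) (Ici a) := by
  rw [integrableOn_Ici_iff_integrableOn_Ioi]
  have : (fun x => (1 / (2 * b)) * Real.exp (-x / b))
      = fun x => (1 / (2 * b)) * Real.exp (-b⁻¹ * x) := by
    funext x; rw [show -x / b = -b⁻¹ * x by ring]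
  rw [this]
  refine Integrable.const_mul ?_ (1 / (2 * b))
  exact exp_neg_integrableOn_Ioi a (inv_pos.mpr hb)

lemma laplace_Ici (b a : ℝ) (hb : 0 < b) (ha : 0 ≤ a) :
    laplace b (Ici a) = ENNReal.ofReal (Real.exp (-a / b) / 2) := by
  rw [show laplace b = volume.withDensity
    (fun x => ENNReal.ofReal ((1 / (2 * b)) * Real.exp (-|x| / b))) from rfl,
    withDensity_apply _ measurableSet_Ici]
  have h1 : ∫⁻ x in Ici a, ENNReal.ofReal ((1 / (2 * b)) * Real.exp (-|x| / b))
      = ∫⁻ x in Ici a, ENNReal.ofReal ((1 / (2 * b)) * Real.exp (-x / b)) := by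
    refine setLIntegral_congr_fun measurableSet_Ici ?_
    intro x (hx : a ≤ x)
    beta_reduce
    rw [abs_of_nonneg (le_trans ha hx)]
  rw [h1, ← ofReal_integral_eq_lintegral_ofReal (integrableOn_tail b a hb)
    (Filter.Eventually.of_forall fun x => by positivity),
    MeasureTheory.integral_Ici_eq_integral_Ioi, exp_tail_integral b a hb]

lemma laplace_Iic (b a : ℝ) (hb : 0 < b) (ha : 0 ≤ a) :
    laplace b (Iic (-a)) = ENNReal.ofReal (Real.exp (-a / b) / 2) := by
  rw [show laplace b = volume.withDensity
    (fun x => ENNReal.ofReal ((1 / (2 * b)) * Real.exp (-|x| / b))) from rfl,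
    withDensity_apply _ measurableSet_Iic]
  have h1 : ∫⁻ x in Iic (-a), ENNReal.ofReal ((1 / (2 * b)) * Real.exp (-|x| / b))
      = ∫⁻ x in Iic (-a), ENNReal.ofReal ((1 / (2 * b)) * Real.exp (x / b)) := by
    refine setLIntegral_congr_fun measurableSet_Iic ?_
    intro x (hx : x ≤ -a)
    beta_reduce
    rw [abs_of_nonpos (le_trans hx (by linarith)), neg_neg]
  have h2 : IntegrableOn (fun x => (1 / (2 * b)) * Real.exp (x / b)) (Iic (-a)) := by
    have := ((Measure.measurePreserving_neg (volume : Measure ℝ)).integrableOn_comp_preimage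
      (Homeomorph.neg ℝ).measurableEmbedding).mpr (integrableOn_tail b a hb)
    simpa [Function.comp_def, neg_div, neg_Ici] using this
  rw [h1, ← ofReal_integral_eq_lintegral_ofReal h2
    (Filter.Eventually.of_forall fun x => by positivity)]
  have h4 : ∫ x in Iic (-a), (1 / (2 * b)) * Real.exp (x / b)
      = ∫ x in Ioi a, (1 / (2 * b)) * Real.exp (-x / b) := by
    have := integral_comp_neg_Iic (-a) (fun x => (1 / (2 * b)) * Real.exp (-x / b))
    simp only [neg_neg, neg_div] at this ⊢
    rw [← this]
  rw [h4, exp_tail_integral b a hb]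

lemma laplace_ac (b : ℝ) : laplace b ≪ (volume : Measure ℝ) :=
  withDensity_absolutelyContinuous _ _

lemma laplace_univ (b : ℝ) (hb : 0 < b) : laplace b Set.univ = 1 := by
  have h0 : laplace b {(0:ℝ)} = 0 := laplace_ac b (measure_singleton 0)
  have hIoi : laplace b (Ioi (0:ℝ)) = laplace b (Ici (0:ℝ)) := by
    apply le_antisymm (measure_mono Ioi_subset_Ici_self)
    calc laplace b (Ici (0:ℝ)) = laplace b ({0} ∪ Ioi 0) := by rw [singleton_union, Ioi_insert]
    _ ≤ laplace b {(0:ℝ)} + laplace b (Ioi 0) := measure_union_le _ _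
    _ = laplace b (Ioi 0) := by rw [h0, zero_add]
  have huniv : (Set.univ : Set ℝ) = Iic 0 ∪ Ioi 0 := (Iic_union_Ioi).symm
  rw [huniv, measure_union (Iic_disjoint_Ioi le_rfl) measurableSet_Ioi, hIoi]
  rw [show Iic (0:ℝ) = Iic (-0) by norm_num,
    laplace_Iic b 0 hb le_rfl, laplace_Ici b 0 hb le_rfl]
  rw [← ENNReal.ofReal_add (by positivity) (by positivity)]
  norm_num

lemma main_bound (b δ : ℝ) (hb : 0 < b) (hδ0 : 0 < δ) (hδ1 : δ < 1)
    (S : Set ℝ) (hS : MeasurableSet S)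
    (hcompl : laplace b Sᶜ ≤ ENNReal.ofReal δ) :
    laplace b S ≥ ENNReal.ofReal (1 - δ) := by
  have htot : laplace b S + laplace b Sᶜ = 1 := by
    rw [measure_add_measure_compl hS, laplace_univ b hb]
  have hne : laplace b Sᶜ ≠ ⊤ := by
    intro h; rw [h, add_top] at htot; exact ENNReal.top_ne_one htot
  have hS_eq : laplace b S = 1 - laplace b Sᶜ := ENNReal.eq_sub_of_add_eq hne htot
  rw [hS_eq]
  calc ENNReal.ofReal (1 - δ) = ENNReal.ofReal 1 - ENNReal.ofReal δ :=
        ENNReal.ofReal_sub _ hδ0.le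
    _ = 1 - ENNReal.ofReal δ := by rw [ENNReal.ofReal_one]
    _ ≤ 1 - laplace b Sᶜ := tsub_le_tsub_left hcompl 1

lemma exp_bound (b τ d : ℝ) (hb : 0 < b) (hd : 0 < d) (h : b * Real.log (1/d) ≤ τ) :
    Real.exp (-τ/b) ≤ d := by
  rw [← Real.exp_log hd]
  apply Real.exp_le_exp.mpr
  rw [one_div, Real.log_inv] at h
  rw [div_le_iff₀ hb] at *
  nlinarith [Real.log_le_sub_one_of_pos hd]

end Helpers

open Set in
set_option maxHeartbeats 1000000 in

/-- Effectiveness of the Laplace-mechanism per-query decider `LM_sum` for sum queries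
with global sensitivity bound `GS`.  With `ν ~ Lap(GS/ε)`:
(i) if `τ ≥ (GS/ε)·ln(1/δ)` and `qD = qDs` then `Pr[|qD + ν − qDs| < τ] ≥ 1 − δ`;
(ii) if `τ ≥ (GS/ε)·ln(1/(2δ))` and `|qD − qDs| ≥ 2τ` then
`Pr[|qD + ν − qDs| ≥ τ] ≥ 1 − δ`; consequently `LM_sum` (which outputs 1 exactly when
`qD + ν ∈ (qDs − τ, qDs + τ)`) satisfies both effectiveness conditions at `δ` for
every `τ ≥ (GS/ε)·ln(1/δ)`. -/
theorem lapsum_effectiveness (ε δ GS τ qD qDs : ℝ) (hε : 0 < ε)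
    (hδ0 : 0 < δ) (hδ1 : δ < 1) (hGS : 0 < GS) (hτ : 0 < τ) :
    (τ ≥ (GS / ε) * Real.log (1 / δ) → qD = qDs →
      laplace (GS / ε) {x : ℝ | |qD + x - qDs| < τ} ≥ ENNReal.ofReal (1 - δ)) ∧
    (τ ≥ (GS / ε) * Real.log (1 / (2 * δ)) → |qD - qDs| ≥ 2 * τ →
      laplace (GS / ε) {x : ℝ | τ ≤ |qD + x - qDs|} ≥ ENNReal.ofReal (1 - δ)) ∧
    (τ ≥ (GS / ε) * Real.log (1 / δ) →
      ((qD = qDs →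
          laplace (GS / ε) {x : ℝ | qD + x ∈ Set.Ioo (qDs - τ) (qDs + τ)} ≥
            ENNReal.ofReal (1 - δ)) ∧
       (qD ∉ Set.Ioo (qDs - 2 * τ) (qDs + 2 * τ) →
          laplace (GS / ε) {x : ℝ | qD + x ∉ Set.Ioo (qDs - τ) (qDs + τ)} ≥
            ENNReal.ofReal (1 - δ)))) := by
  have hb : 0 < GS / ε := div_pos hGS hε
  set b := GS / ε with hbdef
  -- set identities
  have hsetA : {x : ℝ | |qD + x - qDs| < τ} = Set.Ioo (qDs - τ - qD) (qDs + τ - qD) := by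
    ext x
    simp only [Set.mem_setOf_eq, Set.mem_Ioo, abs_lt]
    constructor <;> rintro ⟨h1, h2⟩ <;> exact ⟨by linarith, by linarith⟩
  have hsetB : {x : ℝ | τ ≤ |qD + x - qDs|}
      = (Set.Ioo (qDs - τ - qD) (qDs + τ - qD))ᶜ := by
    rw [← hsetA]; ext x; simp [not_lt]
  have hsetC : {x : ℝ | qD + x ∈ Set.Ioo (qDs - τ) (qDs + τ)}
      = Set.Ioo (qDs - τ - qD) (qDs + τ - qD) := by
    ext x
    simp only [Set.mem_setOf_eq, Set.mem_Ioo]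
    constructor <;> rintro ⟨h1, h2⟩ <;> exact ⟨by linarith, by linarith⟩
  have hsetD : {x : ℝ | qD + x ∉ Set.Ioo (qDs - τ) (qDs + τ)}
      = (Set.Ioo (qDs - τ - qD) (qDs + τ - qD))ᶜ := by
    rw [show {x : ℝ | qD + x ∉ Set.Ioo (qDs - τ) (qDs + τ)}
      = {x : ℝ | qD + x ∈ Set.Ioo (qDs - τ) (qDs + τ)}ᶜ from rfl, hsetC]
  -- core 1
  have core1 : τ ≥ b * Real.log (1 / δ) → qD = qDs →
      laplace b (Set.Ioo (qDs - τ - qD) (qDs + τ - qD)) ≥ ENNReal.ofReal (1 - δ) := by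
    intro hτ' heq
    subst heq
    have hl : qD - τ - qD = -τ := by ring
    have hu : qD + τ - qD = τ := by ring
    rw [hl, hu]
    have he : Real.exp (-τ / b) ≤ δ := exp_bound b τ δ hb hδ0 hτ'
    refine main_bound b δ hb hδ0 hδ1 _ measurableSet_Ioo ?_
    have hco : (Set.Ioo (-τ) τ)ᶜ = Iic (-τ) ∪ Ici τ := by
      ext x
      simp only [Set.mem_compl_iff, Set.mem_Ioo, Set.mem_union, Set.mem_Iic, Set.mem_Ici,
        not_and_or, not_lt]
    rw [hco]
    calc laplace b (Iic (-τ) ∪ Ici τ) ≤ laplace b (Iic (-τ)) + laplace b (Ici τ) :=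
          measure_union_le _ _
      _ = ENNReal.ofReal (Real.exp (-τ / b) / 2) + ENNReal.ofReal (Real.exp (-τ / b) / 2) := by
          rw [laplace_Iic b τ hb hτ.le, laplace_Ici b τ hb hτ.le]
      _ = ENNReal.ofReal (Real.exp (-τ / b)) := by
          rw [← ENNReal.ofReal_add (by positivity) (by positivity)]; ring_nf
      _ ≤ ENNReal.ofReal δ := ENNReal.ofReal_le_ofReal he
  -- core 2
  have core2 : τ ≥ b * Real.log (1 / (2 * δ)) → |qD - qDs| ≥ 2 * τ →
      laplace b ((Set.Ioo (qDs - τ - qD) (qDs + τ - qD))ᶜ) ≥ ENNReal.ofReal (1 - δ) := by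
    intro hτ' habs
    have he : Real.exp (-τ / b) ≤ 2 * δ := exp_bound b τ (2 * δ) hb (by positivity) hτ'
    refine main_bound b δ hb hδ0 hδ1 _ measurableSet_Ioo.compl ?_
    rw [compl_compl]
    rcases le_abs.mp habs with h | h
    · -- 2τ ≤ qD - qDs : interval to the left of -τ
      have hsub : Set.Ioo (qDs - τ - qD) (qDs + τ - qD) ⊆ Iic (-τ) := by
        intro x hx
        rcases hx with ⟨_, h2⟩
        simp only [Set.mem_Iic]
        linarith
      calc laplace b (Set.Ioo (qDs - τ - qD) (qDs + τ - qD)) ≤ laplace b (Iic (-τ)) :=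
            measure_mono hsub
        _ = ENNReal.ofReal (Real.exp (-τ / b) / 2) := laplace_Iic b τ hb hτ.le
        _ ≤ ENNReal.ofReal δ := ENNReal.ofReal_le_ofReal (by linarith)
    · -- 2τ ≤ qDs - qD : interval to the right of τ
      have hsub : Set.Ioo (qDs - τ - qD) (qDs + τ - qD) ⊆ Ici τ := by
        intro x hx
        rcases hx with ⟨h1, _⟩
        simp only [Set.mem_Ici]
        linarith
      calc laplace b (Set.Ioo (qDs - τ - qD) (qDs + τ - qD)) ≤ laplace b (Ici τ) :=
            measure_mono hsub
        _ = ENNReal.ofReal (Real.exp (-τ / b) / 2) := laplace_Ici b τ hb hτ.le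
        _ ≤ ENNReal.ofReal δ := ENNReal.ofReal_le_ofReal (by linarith)
  have hloglog : b * Real.log (1 / (2 * δ)) ≤ b * Real.log (1 / δ) := by
    apply mul_le_mul_of_nonneg_left _ hb.le
    apply Real.log_le_log (by positivity)
    apply one_div_le_one_div_of_le hδ0 (by linarith)
  refine ⟨?_, ?_, ?_⟩
  · intro h1 h2
    rw [hsetA]
    exact core1 h1 h2
  · intro h1 h2
    rw [hsetB]
    exact core2 h1 h2
  · intro h1
    refine ⟨fun h2 => ?_, fun h2 => ?_⟩
    · rw [hsetC]; exact core1 h1 h2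
    · rw [hsetD]
      apply core2 (le_trans hloglog h1)
      rw [Set.mem_Ioo, not_and_or, not_lt, not_lt] at h2
      rcases h2 with h | h
      · exact le_abs.mpr (Or.inr (by linarith))
      · exact le_abs.mpr (Or.inl (by linarith))
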